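/- Let α > −1/2 and γ ∈ ℝ, and let M_n(x;α,γ) be the −1 Meixner–Pollaczek polynomials. Then for all n, m ∈ ℕ, ∫_{\{x ∈ ℝ : |x| ≥ |γ|\}} sgn(x)·(x+γ)·(x²−γ²)^{α−1/2}·e^{−x²}·M_n(x;α,γ)·M_m(x;α,γ) dx = h_n·δ_{nm}, where h_{2m} = m!·e^{−γ²}·Γ(m+α+1/2) and h_{2m+1} = m!·e^{−γ²}·Γ(m+α+3/2). -/

import Mathlib

open Polynomial Finset MeasureTheory

/-- The Pochhammer symbol `(a)ₖ = a(a+1)⋯(a+k-1)` for real `a`. -/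
noncomputable def pochR (a : ℝ) (k : ℕ) : ℝ := (ascPochhammer ℝ k).eval a

/-- The `-1` Meixner–Pollaczek polynomials `Mₙ(x;α,γ)`, given by their explicit
terminating ₁F₁-type hypergeometric expressions. -/
noncomputable def M1MP (α γ : ℝ) (n : ℕ) : Polynomial ℝ :=
  let m : ℕ := n / 2
  if Even n then
    C ((-1 : ℝ) ^ m * pochR (α + 1 / 2) m) *
      ∑ k ∈ range (m + 1),
        C (pochR (-(m : ℝ)) k / (pochR (α + 1 / 2) k * (k.factorial : ℝ))) *
          (X ^ 2 - C (γ ^ 2)) ^ k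
  else
    C ((-1 : ℝ) ^ m * pochR (α + 3 / 2) m) * (X - C γ) *
      ∑ k ∈ range (m + 1),
        C (pochR (-(m : ℝ)) k / (pochR (α + 3 / 2) k * (k.factorial : ℝ))) *
          (X ^ 2 - C (γ ^ 2)) ^ k

/-- The normalization constants of the `-1` Meixner–Pollaczek orthogonality relation:
`h_{2m} = m! e^{-γ²} Γ(m+α+1/2)`, `h_{2m+1} = m! e^{-γ²} Γ(m+α+3/2)`. -/
noncomputable def M1MPnorm (α γ : ℝ) (n : ℕ) : ℝ :=
  let m : ℕ := n / 2
  if Even n then (m.factorial : ℝ) * Real.exp (-γ ^ 2) * Real.Gamma ((m : ℝ) + α + 1 / 2)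
  else (m.factorial : ℝ) * Real.exp (-γ ^ 2) * Real.Gamma ((m : ℝ) + α + 3 / 2)

lemma pochR_zero (a : ℝ) : pochR a 0 = 1 := by simp [pochR]

lemma pochR_succ (a : ℝ) (k : ℕ) : pochR a (k + 1) = pochR a k * (a + k) := by
  simp [pochR, ascPochhammer_succ_eval]

lemma pochR_pos {a : ℝ} (ha : 0 < a) (k : ℕ) : 0 < pochR a k := by
  induction k with
  | zero => simp [pochR_zero]
  | succ k ih => rw [pochR_succ]; positivity

lemma pochR_neg_nat (n k : ℕ) (hk : k ≤ n) :
    pochR (-(n : ℝ)) k = (-1) ^ k * (k.factorial : ℝ) * (n.choose k) := by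
  induction k with
  | zero => simp [pochR_zero]
  | succ k ih =>
    have hk' : k ≤ n := Nat.le_of_succ_le hk
    rw [pochR_succ, ih hk']
    have h : (n.choose (k+1) * (k+1) : ℕ) = (n.choose k) * (n - k) :=
      Nat.choose_succ_right_eq n k
    have hnk : ((n - k : ℕ) : ℝ) = (n : ℝ) - k := Nat.cast_sub hk' (R := ℝ)
    have h' : ((n.choose (k+1) : ℝ)) * ((k:ℝ)+1) = (n.choose k) * ((n:ℝ) - k) := by
      rw [← hnk]; exact_mod_cast h
    rw [pow_succ, Nat.factorial_succ]
    push_cast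
    linear_combination ((-1:ℝ)^k * (k.factorial : ℝ)) * h'

lemma gamma_poch {s : ℝ} (hs : 0 < s) (k : ℕ) :
    Real.Gamma (s + k) = Real.Gamma s * pochR s k := by
  induction k with
  | zero => simp [pochR_zero]
  | succ k ih =>
    have h1 : s + ((k : ℕ) + 1 : ℕ) = (s + k) + 1 := by push_cast; ring
    have h2 : s + (k : ℝ) ≠ 0 := by positivity
    rw [h1, Real.Gamma_add_one h2, ih, pochR_succ]; ring

/-- The alternating-sum finite-difference lemma. -/
lemma alt_sum : ∀ (n : ℕ) (p : ℝ[X]), p.degree ≤ n →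
    ∑ k ∈ range (n + 1), (-1 : ℝ) ^ k * (n.choose k : ℝ) * p.eval (k : ℝ)
      = (-1) ^ n * (n.factorial : ℝ) * p.coeff n := by
  intro n
  induction n with
  | zero =>
    intro p hp
    rw [Polynomial.eq_C_of_degree_le_zero hp]
    simp
  | succ n ih =>
    intro p hp
    set q : ℝ[X] := taylor 1 p - p with hq
    have hqeval : ∀ x : ℝ, q.eval x = p.eval (x + 1) - p.eval x := by
      intro x; simp [hq, taylor_eval]
    have hqc : ∀ M : ℕ, n < M → q.coeff M = 0 := by
      intro M hM
      have h1 : (taylor (1:ℝ) p).coeff M = (hasseDeriv M p).eval 1 :=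
        taylor_coeff (r := (1:ℝ)) (f := p) M
      have h2 : hasseDeriv M p = C (p.coeff M) := by
        ext j
        rcases j with _ | j
        · simp [hasseDeriv_coeff]
        · rw [hasseDeriv_coeff, coeff_C]
          have : p.coeff (j + 1 + M) = 0 := by
            apply Polynomial.coeff_eq_zero_of_degree_lt
            refine lt_of_le_of_lt hp ?_
            exact_mod_cast (by omega : n + 1 < j + 1 + M)
          simp [this]
      simp [hq, h1, h2]
    have hqdeg : q.degree ≤ n := (Polynomial.degree_le_iff_coeff_zero q n).2
      (fun M hM => hqc M (by exact_mod_cast hM))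
    have hqn : q.coeff n = ((n:ℝ) + 1) * p.coeff (n + 1) := by
      have h1 : (taylor (1:ℝ) p).coeff n = (hasseDeriv n p).eval 1 :=
        taylor_coeff (r := (1:ℝ)) (f := p) n
      have h2 : hasseDeriv n p = C (p.coeff n) + C (((n:ℝ) + 1) * p.coeff (n + 1)) * X := by
        ext j
        rcases j with _ | j
        · simp [hasseDeriv_coeff, coeff_add, coeff_C, coeff_C_mul, coeff_X]
        rcases j with _ | j
        · rw [hasseDeriv_coeff]
          have hc : (1 + n).choose n = n + 1 := by
            rw [Nat.add_comm]; exact Nat.choose_succ_self_right n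
          rw [coeff_add, coeff_C, coeff_C_mul, coeff_X]
          simp [hc, Nat.add_comm 1 n]
        · rw [hasseDeriv_coeff]
          have h0 : p.coeff (j + 2 + n) = 0 := by
            apply Polynomial.coeff_eq_zero_of_degree_lt
            refine lt_of_le_of_lt hp ?_
            exact_mod_cast (by omega : n + 1 < j + 2 + n)
          rw [coeff_add, coeff_C, coeff_C_mul, coeff_X]
          simp [h0]
      rw [hq, Polynomial.coeff_sub, h1, h2]
      simp
    -- Pascal manipulation
    have e1 : ∑ k ∈ range (n + 2), (-1 : ℝ) ^ k * ((n+1).choose k : ℝ) * p.eval (k : ℝ)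
        = ∑ k ∈ range (n + 1), (-1 : ℝ) ^ (k+1) * ((n+1).choose (k+1) : ℝ) * p.eval ((k:ℝ) + 1)
          + p.eval 0 := by
      rw [Finset.sum_range_succ' (fun k => (-1 : ℝ) ^ k * ((n+1).choose k : ℝ) * p.eval (k : ℝ))]
      push_cast
      simp
    have e2 : ∀ k, (((n+1).choose (k+1) : ℕ) : ℝ) = (n.choose k : ℝ) + (n.choose (k+1) : ℝ) := by
      intro k; exact_mod_cast congrArg (Nat.cast (R := ℝ)) (Nat.choose_succ_succ (n) (k))
    have e3 : ∑ k ∈ range (n + 1), (-1 : ℝ) ^ (k+1) * ((n:ℕ).choose (k+1) : ℝ) * p.eval ((k:ℝ) + 1)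
        = ∑ k ∈ range (n + 1), (-1 : ℝ) ^ k * ((n:ℕ).choose k : ℝ) * p.eval (k:ℝ) - p.eval 0 := by
      have := Finset.sum_range_succ' (fun k => (-1 : ℝ) ^ k * ((n:ℕ).choose k : ℝ) * p.eval (k : ℝ)) (n+1)
      have h4 : ∑ k ∈ range (n + 2), (-1 : ℝ) ^ k * ((n:ℕ).choose k : ℝ) * p.eval (k : ℝ)
          = ∑ k ∈ range (n + 1), (-1 : ℝ) ^ k * ((n:ℕ).choose k : ℝ) * p.eval (k : ℝ) := by
        rw [Finset.sum_range_succ]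
        simp [Nat.choose_eq_zero_of_lt (by omega : n < n + 1)]
      rw [h4] at this
      norm_num at this
      push_cast at this ⊢
      linarith [this]
    calc ∑ k ∈ range (n + 1 + 1), (-1 : ℝ) ^ k * ((n+1).choose k : ℝ) * p.eval (k : ℝ)
        = ∑ k ∈ range (n + 1), (-1 : ℝ) ^ (k+1) * ((n+1).choose (k+1) : ℝ) * p.eval ((k:ℝ) + 1)
          + p.eval 0 := e1
      _ = (∑ k ∈ range (n + 1), (-1 : ℝ) ^ (k+1) * ((n).choose k : ℝ) * p.eval ((k:ℝ) + 1))
          + (∑ k ∈ range (n + 1), (-1 : ℝ) ^ (k+1) * ((n).choose (k+1) : ℝ) * p.eval ((k:ℝ) + 1))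
          + p.eval 0 := by
          rw [← Finset.sum_add_distrib]
          congr 1
          refine Finset.sum_congr rfl fun k _ => ?_
          rw [e2 k]; ring
      _ = (∑ k ∈ range (n + 1), (-1 : ℝ) ^ (k+1) * ((n).choose k : ℝ) * p.eval ((k:ℝ) + 1))
          + (∑ k ∈ range (n + 1), (-1 : ℝ) ^ k * ((n).choose k : ℝ) * p.eval (k:ℝ)) := by
          rw [e3]; ring
      _ = - ∑ k ∈ range (n + 1), (-1 : ℝ) ^ k * ((n).choose k : ℝ) * q.eval (k:ℝ) := by
          rw [← Finset.sum_neg_distrib, ← Finset.sum_add_distrib]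
          refine Finset.sum_congr rfl fun k _ => ?_
          rw [hqeval]; ring
      _ = - ((-1)^n * (n.factorial : ℝ) * q.coeff n) := by rw [ih q hqdeg]
      _ = (-1) ^ (n+1) * ((n+1).factorial : ℝ) * p.coeff (n+1) := by
          rw [hqn, Nat.factorial_succ]; push_cast; ring

/-- The (renormalized) generalized Laguerre function `₁F₁(-a; s; t)`. -/
noncomputable def LagF (s : ℝ) (a : ℕ) (t : ℝ) : ℝ :=
  ∑ k ∈ range (a + 1), pochR (-(a : ℝ)) k / (pochR s k * (k.factorial : ℝ)) * t ^ k

/-- basic weight integrability -/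
lemma int_weight {b : ℝ} (hb : -1 < b) :
    IntegrableOn (fun t : ℝ => t ^ b * Real.exp (-t)) (Set.Ioi 0) := by
  have := Real.GammaIntegral_convergent (s := b + 1) (by linarith)
  refine this.congr_fun (fun t ht => ?_) measurableSet_Ioi
  simp only [add_sub_cancel_right]
  ring

lemma int_weight_pow {b : ℝ} (hb : -1 < b) (k : ℕ) :
    IntegrableOn (fun t : ℝ => t ^ b * Real.exp (-t) * t ^ k) (Set.Ioi 0) := by
  have := int_weight (b := b + k) (by have : (0:ℝ) ≤ k := Nat.cast_nonneg k; linarith)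
  refine this.congr_fun (fun t ht => ?_) measurableSet_Ioi
  rw [Set.mem_Ioi] at ht
  beta_reduce
  rw [Real.rpow_add ht, Real.rpow_natCast]
  ring

lemma int_weight_val {b : ℝ} (hb : -1 < b) (k : ℕ) :
    ∫ t in Set.Ioi 0, t ^ b * Real.exp (-t) * t ^ k = Real.Gamma (b + k + 1) := by
  rw [Real.Gamma_eq_integral (by have : (0:ℝ) ≤ k := Nat.cast_nonneg k; linarith)]
  refine setIntegral_congr_fun measurableSet_Ioi (fun t ht => ?_)
  rw [Set.mem_Ioi] at ht
  have : (b + ↑k + 1 - 1 : ℝ) = b + k := by ring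
  rw [this, Real.rpow_add ht, Real.rpow_natCast]
  ring

lemma int_weight_poly {b : ℝ} (hb : -1 < b) (P : ℝ[X]) :
    IntegrableOn (fun t : ℝ => t ^ b * Real.exp (-t) * P.eval t) (Set.Ioi 0) := by
  have : (fun t : ℝ => t ^ b * Real.exp (-t) * P.eval t) =
      fun t => ∑ k ∈ range (P.natDegree + 1), P.coeff k * (t ^ b * Real.exp (-t) * t ^ k) := by
    funext t
    rw [Polynomial.eval_eq_sum_range, Finset.mul_sum]
    exact Finset.sum_congr rfl fun k _ => by ring
  rw [this]
  exact integrable_finset_sum _ fun k _ => (int_weight_pow hb k).const_mul _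

lemma lag_moment {s : ℝ} (hs : 0 < s) (a j : ℕ) (hj : j ≤ a) :
    ∫ t in Set.Ioi 0, t ^ (s - 1) * Real.exp (-t) * t ^ j * LagF s a t
      = if j = a then (-1) ^ a * (a.factorial : ℝ) * Real.Gamma s else 0 := by
  have hb : (-1 : ℝ) < s - 1 := by linarith
  set c : ℕ → ℝ := fun k => pochR (-(a : ℝ)) k / (pochR s k * (k.factorial : ℝ)) with hc
  have step1 : ∫ t in Set.Ioi 0, t ^ (s - 1) * Real.exp (-t) * t ^ j * LagF s a t
      = ∑ k ∈ range (a + 1), ∫ t in Set.Ioi 0, c k * (t ^ (s - 1) * Real.exp (-t) * t ^ (j + k)) := by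
    rw [← integral_finset_sum]
    · refine setIntegral_congr_fun measurableSet_Ioi (fun t ht => ?_)
      simp only [LagF, Finset.mul_sum]
      refine Finset.sum_congr rfl fun k _ => ?_
      rw [pow_add]; ring
    · intro k _
      exact ((int_weight_pow hb (j + k)).const_mul _)
  have step2 : ∀ k : ℕ, (∫ t in Set.Ioi 0, c k * (t ^ (s - 1) * Real.exp (-t) * t ^ (j + k)))
      = c k * Real.Gamma (s + (j + k : ℕ)) := by
    intro k
    rw [integral_const_mul, int_weight_val hb (j + k)]
    congr 1
    push_cast; ring
  set q : ℝ[X] := (ascPochhammer ℝ j).comp (X + C s) with hqdef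
  have hqmonic : q.Monic := (monic_ascPochhammer ℝ j).comp_X_add_C s
  have hqnd : q.natDegree = j := by
    rw [hqdef, natDegree_comp, ascPochhammer_natDegree, natDegree_X_add_C, mul_one]
  have hqdeg : q.degree ≤ (a : WithBot ℕ) := by
    refine le_trans (degree_le_natDegree) ?_
    exact_mod_cast (hqnd ▸ hj)
  have hterm : ∀ k ∈ range (a + 1), c k * Real.Gamma (s + (j + k : ℕ))
      = Real.Gamma s * ((-1 : ℝ) ^ k * (a.choose k : ℝ) * q.eval (k : ℝ)) := by
    intro k hk
    have hka : k ≤ a := by simp at hk; omega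
    have hsk : (0:ℝ) < s + k := by positivity
    have e1 : s + ((j + k : ℕ) : ℝ) = (s + k) + j := by push_cast; ring
    have e2 : Real.Gamma (s + (j + k : ℕ)) = Real.Gamma s * pochR s k * pochR (s + k) j := by
      rw [e1, gamma_poch hsk j, gamma_poch hs k]
    have e3 : q.eval (k : ℝ) = pochR (s + k) j := by
      rw [hqdef, eval_comp]
      simp [pochR, add_comm]
    have hpk : pochR s k ≠ 0 := ne_of_gt (pochR_pos hs k)
    have hfk : (k.factorial : ℝ) ≠ 0 := Nat.cast_ne_zero.mpr k.factorial_ne_zero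
    rw [e2, e3, hc]
    simp only []
    rw [pochR_neg_nat a k hka]
    field_simp
  rw [step1]
  calc ∑ k ∈ range (a + 1), ∫ t in Set.Ioi 0, c k * (t ^ (s - 1) * Real.exp (-t) * t ^ (j + k))
      = ∑ k ∈ range (a + 1), Real.Gamma s * ((-1 : ℝ) ^ k * (a.choose k : ℝ) * q.eval (k : ℝ)) := by
        refine Finset.sum_congr rfl fun k hk => ?_
        rw [step2 k]; exact hterm k hk
    _ = Real.Gamma s * ((-1) ^ a * (a.factorial : ℝ) * q.coeff a) := by
        rw [← Finset.mul_sum, alt_sum a q hqdeg]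
    _ = if j = a then (-1) ^ a * (a.factorial : ℝ) * Real.Gamma s else 0 := by
        rcases eq_or_ne j a with h | h
        · subst h
          have : q.coeff j = 1 := by
            have := hqmonic.leadingCoeff
            rwa [leadingCoeff, hqnd] at this
          rw [if_pos rfl, this]; ring
        · have hlt : q.natDegree < a := by rw [hqnd]; omega
          have : q.coeff a = 0 := coeff_eq_zero_of_natDegree_lt hlt
          rw [if_neg h, this]; ring

noncomputable def lagPoly (s : ℝ) (a : ℕ) : ℝ[X] :=
  ∑ k ∈ range (a + 1), C (pochR (-(a : ℝ)) k / (pochR s k * (k.factorial : ℝ))) * X ^ k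

lemma lagPoly_eval (s : ℝ) (a : ℕ) (t : ℝ) : (lagPoly s a).eval t = LagF s a t := by
  simp [lagPoly, LagF, eval_finset_sum]

lemma lag_ortho_le {s : ℝ} (hs : 0 < s) (a b : ℕ) (hab : a ≤ b) :
    ∫ t in Set.Ioi 0, t ^ (s - 1) * Real.exp (-t) * LagF s a t * LagF s b t
      = if a = b then (a.factorial : ℝ) * Real.Gamma s / pochR s a else 0 := by
  have hb1 : (-1 : ℝ) < s - 1 := by linarith
  set c : ℕ → ℝ := fun k => pochR (-(a : ℝ)) k / (pochR s k * (k.factorial : ℝ)) with hc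
  have step1 : ∫ t in Set.Ioi 0, t ^ (s - 1) * Real.exp (-t) * LagF s a t * LagF s b t
      = ∑ j ∈ range (a + 1), ∫ t in Set.Ioi 0,
          c j * (t ^ (s - 1) * Real.exp (-t) * t ^ j * LagF s b t) := by
    rw [← integral_finset_sum]
    · refine setIntegral_congr_fun measurableSet_Ioi (fun t ht => ?_)
      rw [show LagF s a t = ∑ k ∈ range (a + 1), c k * t ^ k from rfl]
      simp only [Finset.mul_sum, Finset.sum_mul]
      exact Finset.sum_congr rfl fun k _ => by ring
    · intro j _
      have h : IntegrableOn
          (fun t : ℝ => c j * (t ^ (s - 1) * Real.exp (-t) * (X ^ j * lagPoly s b).eval t))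
          (Set.Ioi 0) := (int_weight_poly hb1 (X ^ j * lagPoly s b)).const_mul (c j)
      refine h.congr_fun (fun t ht => ?_) measurableSet_Ioi
      beta_reduce
      rw [eval_mul, eval_pow, eval_X, lagPoly_eval]
      ring
  rw [step1]
  have step2 : ∀ j, j ≤ b → (∫ t in Set.Ioi 0,
        c j * (t ^ (s - 1) * Real.exp (-t) * t ^ j * LagF s b t))
      = c j * (if j = b then (-1) ^ b * (b.factorial : ℝ) * Real.Gamma s else 0) := by
    intro j hj
    rw [integral_const_mul, lag_moment hs b j hj]
  rcases eq_or_lt_of_le hab with h | h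
  · subst h
    rw [if_pos rfl]
    rw [Finset.sum_eq_single a]
    · rw [step2 a le_rfl, if_pos rfl, hc]
      simp only []
      rw [pochR_neg_nat a a le_rfl]
      have h1 : pochR s a ≠ 0 := ne_of_gt (pochR_pos hs a)
      have h2 : (a.factorial : ℝ) ≠ 0 := Nat.cast_ne_zero.mpr a.factorial_ne_zero
      have h3 : ((-1 : ℝ)) ^ a * (-1) ^ a = 1 := by
        rw [← pow_add]; exact Even.neg_one_pow ⟨a, rfl⟩
      field_simp
      rw [Nat.choose_self, Nat.cast_one]
      linear_combination h3
    · intro j hj hja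
      rw [step2 j (by simp at hj; omega), if_neg hja, mul_zero]
    · intro h; simp at h
  · rw [if_neg (by omega)]
    refine Finset.sum_eq_zero fun j hj => ?_
    have hjb : j ≤ b := by simp at hj; omega
    rw [step2 j hjb, if_neg (by simp at hj; omega), mul_zero]

lemma lag_ortho {s : ℝ} (hs : 0 < s) (a b : ℕ) :
    ∫ t in Set.Ioi 0, t ^ (s - 1) * Real.exp (-t) * LagF s a t * LagF s b t
      = if a = b then (a.factorial : ℝ) * Real.Gamma s / pochR s a else 0 := by
  rcases le_or_gt a b with h | h
  · exact lag_ortho_le hs a b h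
  · have := lag_ortho_le hs b a (le_of_lt h)
    have hswap : ∫ t in Set.Ioi 0, t ^ (s - 1) * Real.exp (-t) * LagF s a t * LagF s b t
        = ∫ t in Set.Ioi 0, t ^ (s - 1) * Real.exp (-t) * LagF s b t * LagF s a t := by
      refine setIntegral_congr_fun measurableSet_Ioi (fun t ht => ?_); ring
    rw [hswap, this, if_neg (by omega), if_neg (by omega)]

section SubstSetup
variable (γ : ℝ)

lemma phi_img : (fun x : ℝ => x ^ 2 - γ ^ 2) '' (Set.Ioi |γ|) = Set.Ioi 0 := by
  ext u
  constructor
  · rintro ⟨x, hx, rfl⟩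
    rw [Set.mem_Ioi] at hx ⊢
    have h0 : (0:ℝ) ≤ |γ| := abs_nonneg γ
    have h2 : γ ^ 2 < x ^ 2 := by
      have := sq_abs γ
      nlinarith
    simpa using h2
  · intro hu
    rw [Set.mem_Ioi] at hu
    refine ⟨Real.sqrt (u + γ ^ 2), ?_, ?_⟩
    · rw [Set.mem_Ioi]
      have h1 : |γ| = Real.sqrt (γ ^ 2) := by rw [Real.sqrt_sq_eq_abs]
      rw [h1]
      apply Real.sqrt_lt_sqrt (by positivity)
      linarith
    · show Real.sqrt (u + γ ^ 2) ^ 2 - γ ^ 2 = u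
      rw [Real.sq_sqrt (by positivity)]
      ring

lemma phi_deriv : ∀ x ∈ Set.Ioi |γ|, HasDerivWithinAt (fun x : ℝ => x ^ 2 - γ ^ 2)
    (2 * x) (Set.Ioi |γ|) x := by
  intro x _
  have : HasDerivAt (fun x : ℝ => x ^ 2 - γ ^ 2) (2 * x) x := by
    simpa using ((hasDerivAt_pow 2 x).sub_const (γ ^ 2))
  exact this.hasDerivWithinAt

lemma phi_inj : Set.InjOn (fun x : ℝ => x ^ 2 - γ ^ 2) (Set.Ioi |γ|) := by
  intro x hx y hy h
  rw [Set.mem_Ioi] at hx hy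
  have h0 : (0:ℝ) ≤ |γ| := abs_nonneg γ
  have h2 : x ^ 2 = y ^ 2 := by
    have := congrArg (· + γ ^ 2) h
    simp only at this
    linarith [this]
  nlinarith

lemma sub_integral (h : ℝ → ℝ) :
    ∫ x in Set.Ioi |γ|, (2 * x) * h (x ^ 2 - γ ^ 2) = ∫ u in Set.Ioi 0, h u := by
  have := integral_image_eq_integral_abs_deriv_smul (f' := fun x => 2 * x)
    measurableSet_Ioi (phi_deriv γ) (phi_inj γ) h
  rw [phi_img γ] at this
  rw [this]
  refine setIntegral_congr_fun measurableSet_Ioi (fun x hx => ?_)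
  rw [Set.mem_Ioi] at hx
  have hx0 : 0 < x := lt_of_le_of_lt (abs_nonneg γ) hx
  rw [abs_of_pos (by linarith : (0:ℝ) < 2 * x)]
  simp [smul_eq_mul]

lemma sub_integrable (h : ℝ → ℝ) :
    IntegrableOn h (Set.Ioi 0) ↔
      IntegrableOn (fun x => (2 * x) * h (x ^ 2 - γ ^ 2)) (Set.Ioi |γ|) := by
  have := integrableOn_image_iff_integrableOn_abs_deriv_smul (f' := fun x => 2 * x)
    measurableSet_Ioi (phi_deriv γ) (phi_inj γ) h
  rw [phi_img γ] at this
  rw [this]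
  constructor <;> intro hint <;>
    refine hint.congr_fun (fun x hx => ?_) measurableSet_Ioi <;>
    · rw [Set.mem_Ioi] at hx
      have hx0 : 0 < x := lt_of_le_of_lt (abs_nonneg γ) hx
      beta_reduce
      rw [abs_of_pos (by linarith : (0:ℝ) < 2 * x)]
      simp [smul_eq_mul]

end SubstSetup

/-- bound polynomial : |P.eval x| ≤ (absBound P).eval (x^2) -/
noncomputable def absBound (P : ℝ[X]) : ℝ[X] :=
  ∑ k ∈ range (P.natDegree + 1), C |P.coeff k| * (1 + X) ^ k

lemma absBound_spec (P : ℝ[X]) (x : ℝ) : |P.eval x| ≤ (absBound P).eval (x ^ 2) := by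
  rw [Polynomial.eval_eq_sum_range (x := x) (p := P)]
  refine le_trans (Finset.abs_sum_le_sum_abs _ _) ?_
  rw [absBound, eval_finset_sum]
  refine Finset.sum_le_sum fun k _ => ?_
  rw [abs_mul, abs_pow, eval_mul, eval_C, eval_pow, eval_add, eval_one, eval_X]
  refine mul_le_mul_of_nonneg_left ?_ (abs_nonneg _)
  refine pow_le_pow_left₀ (abs_nonneg x) ?_ k
  nlinarith [abs_nonneg x, sq_abs x, sq_nonneg (|x| - 1)]

lemma absBound_nonneg (P : ℝ[X]) (x : ℝ) : 0 ≤ (absBound P).eval (x ^ 2) :=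
  le_trans (abs_nonneg _) (absBound_spec P x)



noncomputable def fInt (α γ : ℝ) (P Q : ℝ[X]) (x : ℝ) : ℝ :=
  Real.sign x * (x + γ) * (x ^ 2 - γ ^ 2) ^ (α - 1 / 2) * Real.exp (-x ^ 2) *
    P.eval x * Q.eval x

lemma F1_contOn (α γ : ℝ) (P Q : ℝ[X]) :
    ContinuousOn (fun x : ℝ => (x + γ) * (x ^ 2 - γ ^ 2) ^ (α - 1 / 2) * Real.exp (-x ^ 2) *
      P.eval x * Q.eval x) {x : ℝ | γ ^ 2 < x ^ 2} := by
  refine ContinuousOn.mul (ContinuousOn.mul (ContinuousOn.mul (ContinuousOn.mul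
    (continuous_id.add continuous_const).continuousOn ?_) ?_) ?_) ?_
  · refine ContinuousOn.rpow_const ?_ ?_
    · exact ((continuous_pow 2).sub continuous_const).continuousOn
    · intro x hx
      left
      have h2 : γ ^ 2 < x ^ 2 := hx
      intro h
      have h' : x ^ 2 - γ ^ 2 = 0 := h
      nlinarith
  · exact (Real.continuous_exp.comp (continuous_pow 2).neg).continuousOn
  · exact P.continuous.continuousOn
  · exact Q.continuous.continuousOn

lemma sq_set_meas (γ : ℝ) : MeasurableSet {x : ℝ | γ ^ 2 < x ^ 2} := by
  have : IsOpen {x : ℝ | γ ^ 2 < x ^ 2} :=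
    isOpen_lt continuous_const (continuous_pow 2)
  exact this.measurableSet

lemma Ioi_sub_sq (γ : ℝ) : Set.Ioi |γ| ⊆ {x : ℝ | γ ^ 2 < x ^ 2} := by
  intro x hx
  rw [Set.mem_Ioi] at hx
  have h0 : (0:ℝ) ≤ |γ| := abs_nonneg γ
  have := sq_abs γ
  simp only [Set.mem_setOf_eq]
  nlinarith

lemma fInt_meas (α γ : ℝ) (P Q : ℝ[X]) :
    AEStronglyMeasurable (fInt α γ P Q) (volume.restrict (Set.Ioi |γ|)) := by
  have h := ((F1_contOn α γ P Q).mono (Ioi_sub_sq γ)).aestronglyMeasurable (μ := volume)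
    (measurableSet_Ioi)
  refine h.congr ?_
  filter_upwards [ae_restrict_mem measurableSet_Ioi] with x hx
  rw [Set.mem_Ioi] at hx
  have hx0 : 0 < x := lt_of_le_of_lt (abs_nonneg γ) hx
  simp [fInt, Real.sign_of_pos hx0]

lemma fInt_meas_neg (α γ : ℝ) (P Q : ℝ[X]) :
    AEStronglyMeasurable (fun x => fInt α γ P Q (-x)) (volume.restrict (Set.Ioi |γ|)) := by
  have hmaps : Set.MapsTo (fun x : ℝ => -x) (Set.Ioi |γ|) {x : ℝ | γ ^ 2 < x ^ 2} := by
    intro x hx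
    rw [Set.mem_Ioi] at hx
    have h0 : (0:ℝ) ≤ |γ| := abs_nonneg γ
    have := sq_abs γ
    show γ ^ 2 < (-x) ^ 2
    nlinarith
  have hcont := ((F1_contOn α γ P Q).comp continuous_neg.continuousOn hmaps).neg
  have h := hcont.aestronglyMeasurable (μ := volume) (measurableSet_Ioi)
  refine h.congr ?_
  filter_upwards [ae_restrict_mem measurableSet_Ioi] with x hx
  rw [Set.mem_Ioi] at hx
  have hx0 : 0 < x := lt_of_le_of_lt (abs_nonneg γ) hx
  simp only [Function.comp_apply, Pi.neg_apply, fInt, Real.sign_of_neg (by linarith : -x < 0)]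
  ring

lemma dom_aux {α γ : ℝ} (hα : -(1/2:ℝ) < α) (B : ℝ[X]) (f : ℝ → ℝ)
    (hmeas : AEStronglyMeasurable f (volume.restrict (Set.Ioi |γ|)))
    (hbound : ∀ x ∈ Set.Ioi |γ|, |f x| ≤ (2*x) * ((x^2-γ^2) ^ (α - 1/2) *
      Real.exp (-(x^2-γ^2+γ^2)) * B.eval (x^2-γ^2+γ^2))) :
    IntegrableOn f (Set.Ioi |γ|) := by
  set h : ℝ → ℝ := fun u => u ^ (α - 1/2) * Real.exp (-(u+γ^2)) * B.eval (u+γ^2) with hh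
  have hint : IntegrableOn h (Set.Ioi 0) := by
    have h2 : IntegrableOn (fun u : ℝ => Real.exp (-γ^2) *
        (u ^ (α - 1/2) * Real.exp (-u) * (B.comp (X + C (γ^2))).eval u)) (Set.Ioi 0) :=
      (int_weight_poly (show (-1:ℝ) < α - 1/2 by linarith) (B.comp (X + C (γ^2)))).const_mul _
    refine h2.congr_fun (fun u hu => ?_) measurableSet_Ioi
    rw [hh]
    simp only [eval_comp, eval_add, eval_X, eval_C]
    rw [show -(u + γ^2) = -u + -γ^2 by ring, Real.exp_add]
    ring
  have hG : IntegrableOn (fun x => (2*x) * h (x^2 - γ^2)) (Set.Ioi |γ|) :=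
    (sub_integrable γ h).mp hint
  refine Integrable.mono' hG hmeas ?_
  filter_upwards [ae_restrict_mem measurableSet_Ioi] with x hx
  rw [Real.norm_eq_abs]
  exact hbound x hx

lemma fInt_integrable {α γ : ℝ} (hα : -(1/2:ℝ) < α) (P Q : ℝ[X]) :
    IntegrableOn (fInt α γ P Q) (Set.Ioi |γ|) := by
  refine dom_aux hα (absBound P * absBound Q) _ (fInt_meas α γ P Q) ?_
  intro x hx
  rw [Set.mem_Ioi] at hx
  have hx0 : 0 < x := lt_of_le_of_lt (abs_nonneg γ) hx
  have hu : 0 < x^2 - γ^2 := by nlinarith [sq_abs γ, abs_nonneg γ]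
  have he : x^2 - γ^2 + γ^2 = x^2 := by ring
  rw [he]
  have hRE : 0 ≤ (x^2-γ^2) ^ (α - 1/2) * Real.exp (-x^2) :=
    mul_nonneg (Real.rpow_nonneg (le_of_lt hu) _) (Real.exp_nonneg _)
  have h1 : fInt α γ P Q x = (x+γ) * ((x^2-γ^2) ^ (α - 1/2) * Real.exp (-x^2)) *
      (P.eval x * Q.eval x) := by
    rw [fInt, Real.sign_of_pos hx0]; ring
  have b1 : |x+γ| ≤ 2*x := by
    rw [abs_le]
    have := neg_abs_le γ; have := le_abs_self γ
    constructor <;> linarith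
  have b2 : |P.eval x * Q.eval x| ≤ (absBound P * absBound Q).eval (x^2) := by
    rw [abs_mul, eval_mul]
    exact mul_le_mul (absBound_spec P x) (absBound_spec Q x) (abs_nonneg _)
      (absBound_nonneg P x)
  calc |fInt α γ P Q x|
      = |x+γ| * ((x^2-γ^2) ^ (α - 1/2) * Real.exp (-x^2)) * |P.eval x * Q.eval x| := by
        rw [h1, abs_mul, abs_mul, abs_of_nonneg hRE]
    _ ≤ (2*x) * ((x^2-γ^2) ^ (α - 1/2) * Real.exp (-x^2)) *
        ((absBound P * absBound Q).eval (x^2)) := by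
        refine mul_le_mul (mul_le_mul_of_nonneg_right b1 hRE) b2 (abs_nonneg _) ?_
        exact mul_nonneg (by linarith) hRE
    _ = (2*x) * ((x^2-γ^2) ^ (α - 1/2) * Real.exp (-x^2) *
        (absBound P * absBound Q).eval (x^2)) := by ring

lemma fInt_integrable_neg {α γ : ℝ} (hα : -(1/2:ℝ) < α) (P Q : ℝ[X]) :
    IntegrableOn (fun x => fInt α γ P Q (-x)) (Set.Ioi |γ|) := by
  refine dom_aux hα (absBound P * absBound Q) _ (fInt_meas_neg α γ P Q) ?_
  intro x hx
  rw [Set.mem_Ioi] at hx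
  have hx0 : 0 < x := lt_of_le_of_lt (abs_nonneg γ) hx
  have hu : 0 < x^2 - γ^2 := by nlinarith [sq_abs γ, abs_nonneg γ]
  have he : x^2 - γ^2 + γ^2 = x^2 := by ring
  rw [he]
  have hRE : 0 ≤ (x^2-γ^2) ^ (α - 1/2) * Real.exp (-x^2) :=
    mul_nonneg (Real.rpow_nonneg (le_of_lt hu) _) (Real.exp_nonneg _)
  have h1 : fInt α γ P Q (-x) = -((-x+γ) * ((x^2-γ^2) ^ (α - 1/2) * Real.exp (-x^2)) *
      (P.eval (-x) * Q.eval (-x))) := by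
    rw [fInt, Real.sign_of_neg (by linarith : -x < 0), neg_sq]; ring
  have b1 : |-x+γ| ≤ 2*x := by
    rw [abs_le]
    have := neg_abs_le γ; have := le_abs_self γ
    constructor <;> linarith
  have b2 : |P.eval (-x) * Q.eval (-x)| ≤ (absBound P * absBound Q).eval (x^2) := by
    rw [abs_mul, eval_mul]
    have s1 := absBound_spec P (-x)
    have s2 := absBound_spec Q (-x)
    have s3 := absBound_nonneg P (-x)
    rw [neg_sq] at s1 s2 s3
    exact mul_le_mul s1 s2 (abs_nonneg _) s3
  calc |fInt α γ P Q (-x)|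
      = |-x+γ| * ((x^2-γ^2) ^ (α - 1/2) * Real.exp (-x^2)) * |P.eval (-x) * Q.eval (-x)| := by
        rw [h1, abs_neg, abs_mul, abs_mul, abs_of_nonneg hRE]
    _ ≤ (2*x) * ((x^2-γ^2) ^ (α - 1/2) * Real.exp (-x^2)) *
        ((absBound P * absBound Q).eval (x^2)) := by
        refine mul_le_mul (mul_le_mul_of_nonneg_right b1 hRE) b2 (abs_nonneg _) ?_
        exact mul_nonneg (by linarith) hRE
    _ = (2*x) * ((x^2-γ^2) ^ (α - 1/2) * Real.exp (-x^2) *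
        (absBound P * absBound Q).eval (x^2)) := by ring

lemma set_split (γ : ℝ) : {x : ℝ | |γ| ≤ |x|} = Set.Iic (-|γ|) ∪ Set.Ici |γ| := by
  ext x
  simp only [Set.mem_setOf_eq, Set.mem_union, Set.mem_Iic, Set.mem_Ici, le_abs]
  constructor
  · rintro (h | h)
    · right; exact h
    · left; linarith
  · rintro (h | h)
    · right; linarith
    · left; exact h

lemma integrableOn_Iic_neg {g : ℝ} {f : ℝ → ℝ}
    (h : IntegrableOn (fun x => f (-x)) (Set.Ici g)) :
    IntegrableOn f (Set.Iic (-g)) := by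
  have A : MeasurableEmbedding (fun x : ℝ => -x) :=
    (Homeomorph.neg ℝ).isClosedEmbedding.measurableEmbedding
  have hmap : volume.restrict (Set.Iic (-g)) =
      Measure.map (fun x : ℝ => -x) (volume.restrict (Set.Ici g)) := by
    have h1 : (fun x : ℝ => -x) ⁻¹' (Set.Iic (-g)) = Set.Ici g := by
      ext x; simp only [Set.mem_preimage, Set.mem_Iic, Set.mem_Ici]; constructor <;> intro <;> linarith
    conv_lhs => rw [← Measure.map_neg_eq_self (volume : Measure ℝ)]
    rw [Measure.restrict_map A.measurable measurableSet_Iic, h1]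
  rw [IntegrableOn, hmap, A.integrable_map_iff]
  exact h

lemma reduce {α γ : ℝ} (hα : -(1/2:ℝ) < α) (P Q : ℝ[X]) :
    ∫ x in {x : ℝ | |γ| ≤ |x|}, fInt α γ P Q x
      = ∫ x in Set.Ioi |γ|, (fInt α γ P Q x + fInt α γ P Q (-x)) := by
  have h1 : IntegrableOn (fInt α γ P Q) (Set.Ioi |γ|) := fInt_integrable hα P Q
  have h2 : IntegrableOn (fun x => fInt α γ P Q (-x)) (Set.Ioi |γ|) :=
    fInt_integrable_neg hα P Q
  have h1' : IntegrableOn (fInt α γ P Q) (Set.Ici |γ|) :=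
    Iff.mpr integrableOn_Ici_iff_integrableOn_Ioi h1
  have h2' : IntegrableOn (fun x => fInt α γ P Q (-x)) (Set.Ici |γ|) :=
    Iff.mpr integrableOn_Ici_iff_integrableOn_Ioi h2
  have h2'' : IntegrableOn (fInt α γ P Q) (Set.Iic (-|γ|)) := integrableOn_Iic_neg h2'
  have hdisj : AEDisjoint volume (Set.Iic (-|γ|)) (Set.Ici |γ|) := by
    have hsub : Set.Iic (-|γ|) ∩ Set.Ici |γ| ⊆ Set.Icc |γ| (-|γ|) := by
      rintro x ⟨hx1, hx2⟩; exact ⟨hx2, hx1⟩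
    refine measure_mono_null hsub ?_
    rw [Real.volume_Icc]
    simp only [ENNReal.ofReal_eq_zero]
    have := abs_nonneg γ
    linarith
  rw [set_split γ, integral_union_ae hdisj measurableSet_Ici.nullMeasurableSet h2'' h1']
  rw [← integral_comp_neg_Ioi, ← integral_Ici_eq_integral_Ioi, ← integral_Ici_eq_integral_Ioi]
  rw [← integral_add h2' h1']
  refine setIntegral_congr_fun measurableSet_Ici (fun x _ => ?_)
  ring

lemma M1MP_even_eval (α γ : ℝ) (a : ℕ) (x : ℝ) :
    (M1MP α γ (2*a)).eval x
      = ((-1:ℝ)^a * pochR (α+1/2) a) * LagF (α+1/2) a (x^2 - γ^2) := by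
  have he : Even (2*a) := even_two_mul a
  have hd : 2*a/2 = a := by omega
  simp only [M1MP, hd, if_pos he, LagF]
  rw [eval_mul, eval_C, eval_finset_sum]
  congr 1
  refine Finset.sum_congr rfl fun k _ => ?_
  rw [eval_mul, eval_C, eval_pow, eval_sub, eval_pow, eval_X, eval_C]

lemma M1MP_odd_eval (α γ : ℝ) (a : ℕ) (x : ℝ) :
    (M1MP α γ (2*a+1)).eval x
      = ((-1:ℝ)^a * pochR (α+3/2) a) * (x - γ) * LagF (α+3/2) a (x^2 - γ^2) := by
  have he : ¬ Even (2*a+1) := by simp [Nat.even_iff]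
  have hd : (2*a+1)/2 = a := by omega
  simp only [M1MP, hd, if_neg he, LagF]
  rw [eval_mul, eval_mul, eval_C, eval_sub, eval_X, eval_C, eval_finset_sum]
  congr 1
  refine Finset.sum_congr rfl fun k _ => ?_
  rw [eval_mul, eval_C, eval_pow, eval_sub, eval_pow, eval_X, eval_C]

lemma case_ee {α γ : ℝ} (hα : -(1/2:ℝ) < α) (a b : ℕ) :
    ∫ x in Set.Ioi |γ|,
        (fInt α γ (M1MP α γ (2*a)) (M1MP α γ (2*b)) x
          + fInt α γ (M1MP α γ (2*a)) (M1MP α γ (2*b)) (-x))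
      = if a = b then (a.factorial : ℝ) * Real.exp (-γ^2) * Real.Gamma ((a:ℝ) + α + 1/2)
        else 0 := by
  set s₀ : ℝ := α + 1/2 with hs₀
  have hs : 0 < s₀ := by rw [hs₀]; linarith
  set c : ℝ := (((-1:ℝ)^a * pochR s₀ a) * ((-1:ℝ)^b * pochR s₀ b))
      * Real.exp (-γ^2) with hc
  set W : ℝ → ℝ := fun u => c * (u ^ (s₀ - 1) * Real.exp (-u) *
      LagF s₀ a u * LagF s₀ b u) with hW
  have key : ∀ x ∈ Set.Ioi |γ|,
      fInt α γ (M1MP α γ (2*a)) (M1MP α γ (2*b)) x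
        + fInt α γ (M1MP α γ (2*a)) (M1MP α γ (2*b)) (-x) = (2*x) * W (x^2 - γ^2) := by
    intro x hx
    rw [Set.mem_Ioi] at hx
    have hx0 : 0 < x := lt_of_le_of_lt (abs_nonneg γ) hx
    have hu : 0 < x^2 - γ^2 := by nlinarith [sq_abs γ, abs_nonneg γ]
    simp only [fInt, hW, hc, hs₀, M1MP_even_eval, Real.sign_of_pos hx0,
      Real.sign_of_neg (by linarith : -x < 0), neg_sq]
    rw [show (α+1/2) - 1 = α - 1/2 by ring,
      show Real.exp (-x^2) = Real.exp (-(x^2-γ^2)) * Real.exp (-γ^2) by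
        rw [← Real.exp_add]; congr 1; ring]
    ring
  rw [setIntegral_congr_fun measurableSet_Ioi key, sub_integral γ W, hW]
  rw [integral_const_mul, lag_ortho hs a b]
  rcases eq_or_ne a b with h | h
  · subst h
    rw [if_pos rfl, if_pos rfl, hc]
    have h2 : Real.Gamma ((a:ℝ) + α + 1/2) = Real.Gamma s₀ * pochR s₀ a := by
      rw [← gamma_poch hs a, hs₀]; congr 1; ring
    have h3 : pochR s₀ a ≠ 0 := ne_of_gt (pochR_pos hs a)
    have h4 : ((-1:ℝ))^a * (-1)^a = 1 := by
      rw [← pow_add]; exact Even.neg_one_pow ⟨a, rfl⟩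
    rw [h2]
    have h5 : pochR s₀ a * (pochR s₀ a)⁻¹ = 1 := mul_inv_cancel₀ h3
    rw [div_eq_mul_inv]
    linear_combination (Real.exp (-γ^2) * (a.factorial : ℝ) * Real.Gamma s₀ *
        (pochR s₀ a)⁻¹ * pochR s₀ a * pochR s₀ a) * h4
      + (Real.exp (-γ^2) * (a.factorial : ℝ) * Real.Gamma s₀ * pochR s₀ a) * h5
  · rw [if_neg h, if_neg h, mul_zero]

lemma case_oo {α γ : ℝ} (hα : -(1/2:ℝ) < α) (a b : ℕ) :
    ∫ x in Set.Ioi |γ|,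
        (fInt α γ (M1MP α γ (2*a+1)) (M1MP α γ (2*b+1)) x
          + fInt α γ (M1MP α γ (2*a+1)) (M1MP α γ (2*b+1)) (-x))
      = if a = b then (a.factorial : ℝ) * Real.exp (-γ^2) * Real.Gamma ((a:ℝ) + α + 3/2)
        else 0 := by
  set s₀ : ℝ := α + 3/2 with hs₀
  have hs : 0 < s₀ := by rw [hs₀]; linarith
  set c : ℝ := (((-1:ℝ)^a * pochR s₀ a) * ((-1:ℝ)^b * pochR s₀ b))
      * Real.exp (-γ^2) with hc
  set W : ℝ → ℝ := fun u => c * (u ^ (s₀ - 1) * Real.exp (-u) *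
      LagF s₀ a u * LagF s₀ b u) with hW
  have key : ∀ x ∈ Set.Ioi |γ|,
      fInt α γ (M1MP α γ (2*a+1)) (M1MP α γ (2*b+1)) x
        + fInt α γ (M1MP α γ (2*a+1)) (M1MP α γ (2*b+1)) (-x) = (2*x) * W (x^2 - γ^2) := by
    intro x hx
    rw [Set.mem_Ioi] at hx
    have hx0 : 0 < x := lt_of_le_of_lt (abs_nonneg γ) hx
    have hu : 0 < x^2 - γ^2 := by nlinarith [sq_abs γ, abs_nonneg γ]
    simp only [fInt, hW, hc, hs₀, M1MP_odd_eval, Real.sign_of_pos hx0,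
      Real.sign_of_neg (by linarith : -x < 0), neg_sq]
    rw [show ((α+3/2) - 1 : ℝ) = (α - 1/2) + 1 by ring, Real.rpow_add hu, Real.rpow_one,
      show Real.exp (-x^2) = Real.exp (-(x^2-γ^2)) * Real.exp (-γ^2) by
        rw [← Real.exp_add]; congr 1; ring]
    ring
  rw [setIntegral_congr_fun measurableSet_Ioi key, sub_integral γ W, hW]
  rw [integral_const_mul, lag_ortho hs a b]
  rcases eq_or_ne a b with h | h
  · subst h
    rw [if_pos rfl, if_pos rfl, hc]
    have h2 : Real.Gamma ((a:ℝ) + α + 3/2) = Real.Gamma s₀ * pochR s₀ a := by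
      rw [← gamma_poch hs a, hs₀]; congr 1; ring
    have h3 : pochR s₀ a ≠ 0 := ne_of_gt (pochR_pos hs a)
    have h4 : ((-1:ℝ))^a * (-1)^a = 1 := by
      rw [← pow_add]; exact Even.neg_one_pow ⟨a, rfl⟩
    rw [h2]
    have h5 : pochR s₀ a * (pochR s₀ a)⁻¹ = 1 := mul_inv_cancel₀ h3
    rw [div_eq_mul_inv]
    linear_combination (Real.exp (-γ^2) * (a.factorial : ℝ) * Real.Gamma s₀ *
        (pochR s₀ a)⁻¹ * pochR s₀ a * pochR s₀ a) * h4
      + (Real.exp (-γ^2) * (a.factorial : ℝ) * Real.Gamma s₀ * pochR s₀ a) * h5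
  · rw [if_neg h, if_neg h, mul_zero]

lemma case_eo {α γ : ℝ} (a b : ℕ) :
    ∫ x in Set.Ioi |γ|,
        (fInt α γ (M1MP α γ (2*a)) (M1MP α γ (2*b+1)) x
          + fInt α γ (M1MP α γ (2*a)) (M1MP α γ (2*b+1)) (-x)) = 0 := by
  rw [show (0:ℝ) = ∫ x in Set.Ioi |γ|, (0:ℝ) from by simp]
  refine setIntegral_congr_fun measurableSet_Ioi (fun x hx => ?_)
  rw [Set.mem_Ioi] at hx
  have hx0 : 0 < x := lt_of_le_of_lt (abs_nonneg γ) hx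
  simp only [fInt, M1MP_even_eval, M1MP_odd_eval, Real.sign_of_pos hx0,
    Real.sign_of_neg (by linarith : -x < 0), neg_sq]
  ring

lemma case_oe {α γ : ℝ} (a b : ℕ) :
    ∫ x in Set.Ioi |γ|,
        (fInt α γ (M1MP α γ (2*a+1)) (M1MP α γ (2*b)) x
          + fInt α γ (M1MP α γ (2*a+1)) (M1MP α γ (2*b)) (-x)) = 0 := by
  rw [show (0:ℝ) = ∫ x in Set.Ioi |γ|, (0:ℝ) from by simp]
  refine setIntegral_congr_fun measurableSet_Ioi (fun x hx => ?_)
  rw [Set.mem_Ioi] at hx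
  have hx0 : 0 < x := lt_of_le_of_lt (abs_nonneg γ) hx
  simp only [fInt, M1MP_even_eval, M1MP_odd_eval, Real.sign_of_pos hx0,
    Real.sign_of_neg (by linarith : -x < 0), neg_sq]
  ring

/-- the orthogonality relation of the `-1` Meixner–Pollaczek polynomials
on `(-∞,-|γ|] ∪ [|γ|,∞)` with weight `sgn(x)(x+γ)(x²-γ²)^{α-1/2} e^{-x²}`. -/
theorem M1MeixnerPollaczek_orthogonality (α γ : ℝ) (hα : α > -(1 / 2)) (n m : ℕ) :
    ∫ x in {x : ℝ | |γ| ≤ |x|},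
        Real.sign x * (x + γ) * (x ^ 2 - γ ^ 2) ^ (α - 1 / 2) * Real.exp (-x ^ 2) *
          (M1MP α γ n).eval x * (M1MP α γ m).eval x
      = if n = m then M1MPnorm α γ n else 0 := by
  have hα' : -(1/2:ℝ) < α := hα
  have hmain : ∫ x in {x : ℝ | |γ| ≤ |x|},
      Real.sign x * (x + γ) * (x ^ 2 - γ ^ 2) ^ (α - 1 / 2) * Real.exp (-x ^ 2) *
        (M1MP α γ n).eval x * (M1MP α γ m).eval x
      = ∫ x in Set.Ioi |γ|, (fInt α γ (M1MP α γ n) (M1MP α γ m) x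
          + fInt α γ (M1MP α γ n) (M1MP α γ m) (-x)) := reduce hα' _ _
  rw [hmain]
  obtain ⟨a, ha | ha⟩ := Nat.even_or_odd' n <;> obtain ⟨b, hb | hb⟩ := Nat.even_or_odd' m <;>
    subst ha hb
  · rw [case_ee hα' a b]
    have hnorm : M1MPnorm α γ (2*a)
        = (a.factorial : ℝ) * Real.exp (-γ^2) * Real.Gamma ((a:ℝ) + α + 1/2) := by
      simp only [M1MPnorm, if_pos (even_two_mul a), show 2*a/2 = a by omega]
    rw [hnorm]
    have : (2*a = 2*b) ↔ (a = b) := by omega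
    rw [if_congr this rfl rfl]
  · rw [case_eo a b, if_neg (by omega)]
  · rw [case_oe a b, if_neg (by omega)]
  · rw [case_oo hα' a b]
    have hnorm : M1MPnorm α γ (2*a+1)
        = (a.factorial : ℝ) * Real.exp (-γ^2) * Real.Gamma ((a:ℝ) + α + 3/2) := by
      simp only [M1MPnorm, if_neg (by simp [Nat.even_iff] : ¬ Even (2*a+1)),
        show (2*a+1)/2 = a by omega]
    rw [hnorm]
    have : (2*a+1 = 2*b+1) ↔ (a = b) := by omega
    rw [if_congr this rfl rfl]
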